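/- Let s : C⊗A → A⊗C be a twisting map with C = k[y]/⟨y^n⟩ and A⊗_s C the corresponding twisted tensor product. Let J_0 ∈ M_n(A) be the nilpotent Jordan matrix (1's on the superdiagonal). Then the maps a ↦ M(a) (where M(a)_{ij} = γ^i_j(a)) and y ↦ J_0 extend to an injective algebra homomorphism φ : A⊗_s C → M_n(A). -/

import Mathlib

open TensorProduct

/-- A twisting map `s : C ⊗ A → A ⊗ C`. -/
def IsTwistingMap (k A C : Type*) [CommRing k] [Ring A] [Ring C] [Algebra k A]
    [Algebra k C] (s : C ⊗[k] A →ₗ[k] A ⊗[k] C) : Prop :=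
  (∀ a : A, s ((1 : C) ⊗ₜ[k] a) = a ⊗ₜ[k] (1 : C)) ∧
  (∀ c : C, s (c ⊗ₜ[k] (1 : A)) = (1 : A) ⊗ₜ[k] c) ∧
  (∀ (c c' : C) (a : A), s ((c * c') ⊗ₜ[k] a) =
    (LinearMap.lTensor A (LinearMap.mul' k C))
      ((TensorProduct.assoc k A C C)
        ((LinearMap.rTensor C s)
          ((TensorProduct.assoc k C A C).symm (c ⊗ₜ[k] (s (c' ⊗ₜ[k] a))))))) ∧
  (∀ (c : C) (a a' : A), s (c ⊗ₜ[k] (a * a')) =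
    (LinearMap.rTensor C (LinearMap.mul' k A))
      ((TensorProduct.assoc k A A C).symm
        ((LinearMap.lTensor A s)
          ((TensorProduct.assoc k A C A)
            ((LinearMap.rTensor A s) ((c ⊗ₜ[k] a) ⊗ₜ[k] a'))))))

/-- The multiplication `μ_s = (μ_A ⊗ μ_C) ∘ (A ⊗ s ⊗ C)` of the twisted tensor
product `A ⊗_s C`. -/
noncomputable def twistedMul (k A C : Type*) [CommRing k] [Ring A] [Ring C]
    [Algebra k A] [Algebra k C] (s : C ⊗[k] A →ₗ[k] A ⊗[k] C) :
    (A ⊗[k] C) ⊗[k] (A ⊗[k] C) →ₗ[k] A ⊗[k] C :=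
  TensorProduct.map (LinearMap.mul' k A) (LinearMap.mul' k C)
    ∘ₗ (TensorProduct.assoc k A A (C ⊗[k] C)).symm.toLinearMap
    ∘ₗ LinearMap.lTensor A ((TensorProduct.assoc k A C C).toLinearMap
        ∘ₗ LinearMap.rTensor C s
        ∘ₗ (TensorProduct.assoc k C A C).symm.toLinearMap)
    ∘ₗ (TensorProduct.assoc k A C (A ⊗[k] C)).toLinearMap

/-- The truncated polynomial algebra `k[y]/⟨y^n⟩`. -/
abbrev TruncPoly (k : Type*) [CommRing k] (n : ℕ) : Type _ :=
  Polynomial k ⧸ Ideal.span {(Polynomial.X : Polynomial k) ^ n}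

/-- The class of `y` in `k[y]/⟨y^n⟩`. -/
noncomputable def truncY (k : Type*) [CommRing k] (n : ℕ) : TruncPoly k n :=
  Ideal.Quotient.mk _ Polynomial.X

/-- The nilpotent Jordan matrix `J₀` (ones on the superdiagonal). -/
def jordanJ (A : Type*) [Ring A] (n : ℕ) : Matrix (Fin n) (Fin n) A :=
  Matrix.of fun i j : Fin n => if (i : ℕ) + 1 = (j : ℕ) then 1 else 0

section Aux

variable {k : Type*} [CommRing k] {n : ℕ}

lemma sumFinIte {β : Type*} [AddCommMonoid β] (f : Fin n → β) (v : ℕ) :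
    (∑ m : Fin n, if v = (m : ℕ) then f m else 0) =
      if h : v < n then f ⟨v, h⟩ else 0 := by
  by_cases h : v < n
  · rw [dif_pos h, Finset.sum_eq_single ⟨v, h⟩]
    · simp
    · intro m _ hm
      rw [if_neg]
      intro hv
      exact hm (Fin.ext hv.symm)
    · intro hmem; exact absurd (Finset.mem_univ _) hmem
  · rw [dif_neg h]
    apply Finset.sum_eq_zero
    intro m _
    rw [if_neg]
    intro hv
    exact h (hv ▸ m.isLt)


lemma sumFinIte' {β : Type*} [AddCommMonoid β] (f : Fin n → β) (c : Fin n) :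
    (∑ m : Fin n, if (m : ℕ) = (c : ℕ) then f m else 0) = f c := by
  rw [Finset.sum_eq_single c]
  · rw [if_pos rfl]
  · intro m _ hm
    rw [if_neg (fun hv => hm (Fin.ext hv))]
  · intro hmem; exact absurd (Finset.mem_univ _) hmem

lemma truncY_pow_zero {j : ℕ} (hj : n ≤ j) : (truncY k n) ^ j = 0 := by
  have hn : (truncY k n) ^ n = 0 := by
    rw [truncY, ← map_pow]
    exact Ideal.Quotient.eq_zero_iff_mem.mpr (Ideal.subset_span rfl)
  calc (truncY k n) ^ j = (truncY k n) ^ n * (truncY k n) ^ (j - n) := by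
        rw [← pow_add]; congr 1; omega
    _ = 0 := by rw [hn, zero_mul]

variable {A : Type*} [Ring A]

lemma jordanJ_pow (j : ℕ) :
    (jordanJ A n) ^ j = Matrix.of
      (fun i c : Fin n => if (i : ℕ) + j = (c : ℕ) then 1 else 0) := by
  induction j with
  | zero =>
    ext i c
    simp [Matrix.one_apply, Fin.ext_iff]
  | succ j ih =>
    ext i c
    rw [pow_succ, ih]
    simp only [Matrix.mul_apply, Matrix.of_apply, jordanJ]
    have : ∀ m : Fin n,
        (if (i : ℕ) + j = (m : ℕ) then (1:A) else 0) *
          (if (m : ℕ) + 1 = (c : ℕ) then 1 else 0) =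
        (if (i : ℕ) + j = (m : ℕ) then
          (if (m : ℕ) + 1 = (c : ℕ) then (1:A) else 0) else 0) := by
      intro m; split <;> simp
    rw [Finset.sum_congr rfl fun m _ => this m, sumFinIte
      (fun m : Fin n => if (m : ℕ) + 1 = (c : ℕ) then (1:A) else 0) ((i : ℕ) + j)]
    by_cases h : (i : ℕ) + j < n
    · rw [dif_pos h]
      show (if (i : ℕ) + j + 1 = (c : ℕ) then (1:A) else 0) = _
      rw [Nat.add_assoc]
    · rw [dif_neg h, if_neg]
      omega

lemma jordanJ_pow_zero {j : ℕ} (hj : n ≤ j) : (jordanJ A n) ^ j = 0 := by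
  rw [jordanJ_pow]
  ext i c
  simp only [Matrix.of_apply, Matrix.zero_apply]
  rw [if_neg]
  omega

end Aux

set_option maxHeartbeats 1000000 in
set_option synthInstance.maxHeartbeats 400000 in
/-- The maps `a ↦ M(a)` and `y ↦ J₀` extend to an injective algebra homomorphism
`φ : A ⊗_s k[y]/⟨y^n⟩ → Mₙ(A)`. -/
theorem statement6 {k A : Type*} [CommRing k] [Ring A] [Algebra k A] (n : ℕ)
    (hn : 0 < n)
    (s : TruncPoly k n ⊗[k] A →ₗ[k] A ⊗[k] TruncPoly k n)
    (htw : IsTwistingMap k A (TruncPoly k n) s)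
    (γ : ℕ → ℕ → Module.End k A)
    (hs : ∀ r < n, ∀ a : A,
      s (((truncY k n) ^ r) ⊗ₜ[k] a) =
        ∑ j ∈ Finset.range n, γ r j a ⊗ₜ[k] ((truncY k n) ^ j))
    (hγn : ∀ j < n, γ n j = 0) :
    ∃ φ : A ⊗[k] TruncPoly k n →ₗ[k] Matrix (Fin n) (Fin n) A,
      Function.Injective φ ∧
      φ ((1 : A) ⊗ₜ[k] (1 : TruncPoly k n)) = 1 ∧
      (∀ (a : A) (j : ℕ),
        φ (a ⊗ₜ[k] ((truncY k n) ^ j)) =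
          Matrix.of (fun i j' : Fin n => γ (i : ℕ) (j' : ℕ) a) * (jordanJ A n) ^ j) ∧
      (∀ p q : A ⊗[k] TruncPoly k n,
        φ (twistedMul k A (TruncPoly k n) s (p ⊗ₜ[k] q)) = φ p * φ q) := by
  rcases subsingleton_or_nontrivial k with hk | hk
  · haveI : Subsingleton A := Module.subsingleton k A
    haveI : Subsingleton (A ⊗[k] TruncPoly k n) := Module.subsingleton k _
    refine ⟨0, fun p q _ => Subsingleton.elim p q, Subsingleton.elim _ _,
      fun a j => Subsingleton.elim _ _, fun p q => Subsingleton.elim _ _⟩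
  -- the power basis of k[y]/(y^n)
  let tb : Module.Basis (Fin n) k (TruncPoly k n) :=
    ((AdjoinRoot.powerBasis' (Polynomial.monic_X_pow n)).basis).reindex
      (finCongr (Polynomial.natDegree_X_pow n))
  have htb : ∀ (i : ℕ) (h : i < n), tb ⟨i, h⟩ = (truncY k n) ^ i := by
    intro i h
    show (AdjoinRoot.powerBasis' (Polynomial.monic_X_pow (R := k) n)).basis.reindex
      (finCongr (Polynomial.natDegree_X_pow n)) ⟨i, h⟩ = _
    rw [Module.Basis.reindex_apply]
    exact PowerBasis.basis_eq_pow _ _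
  let e : A ⊗[k] TruncPoly k n ≃ₗ[k] (Fin n →₀ A) :=
    TensorProduct.equivFinsuppOfBasisRight tb
  let κ : Fin n → (A ⊗[k] TruncPoly k n) →ₗ[k] A := fun c =>
    Finsupp.lapply c ∘ₗ e.toLinearMap
  have hκapp : ∀ (c : Fin n) (p : A ⊗[k] TruncPoly k n), κ c p = e p c := fun _ _ => rfl
  -- coefficient computation
  have hκ : ∀ (i : ℕ) (c : Fin n) (x : A),
      κ c (x ⊗ₜ[k] ((truncY k n) ^ i)) = if i = (c : ℕ) then x else 0 := by
    intro i c x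
    by_cases h : i < n
    · rw [hκapp, show ((truncY k n) ^ i) = tb ⟨i, h⟩ from (htb i h).symm,
        TensorProduct.equivFinsuppOfBasisRight_apply_tmul_apply,
        Module.Basis.repr_self, Finsupp.single_apply]
      by_cases hic : i = (c : ℕ)
      · rw [if_pos hic, if_pos (Fin.ext hic), one_smul]
      · rw [if_neg hic, if_neg fun hh => hic (Fin.ext_iff.mp hh), zero_smul]
    · rw [truncY_pow_zero (le_of_not_gt h), tmul_zero, map_zero, if_neg]
      omega
  -- any element is determined by its coefficients
  have hext : ∀ p q : A ⊗[k] TruncPoly k n, (∀ c, κ c p = κ c q) → p = q := by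
    intro p q h
    apply e.injective
    ext c
    exact h c
  -- the matrix of γ's
  let Mlin : A →ₗ[k] Matrix (Fin n) (Fin n) A :=
    { toFun := fun a => Matrix.of fun i j : Fin n => γ (i : ℕ) (j : ℕ) a
      map_add' := fun a b => by ext i c; simp
      map_smul' := fun r a => by ext i c; simp }
  have hMlin : ∀ (a : A) (i c : Fin n), Mlin a i c = γ (i : ℕ) (c : ℕ) a := fun _ _ _ => rfl
  let L : (Fin n →₀ A) →ₗ[k] Matrix (Fin n) (Fin n) A :=
    Finsupp.lsum k fun i : Fin n =>
      (LinearMap.mulRight k ((jordanJ A n) ^ (i : ℕ))) ∘ₗ Mlin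
  have hL : ∀ f : Fin n →₀ A, L f = ∑ i : Fin n, Mlin (f i) * (jordanJ A n) ^ (i : ℕ) := by
    intro f
    rw [show L f = f.sum fun i a => Mlin a * (jordanJ A n) ^ (i : ℕ) from rfl]
    exact Finsupp.sum_fintype _ _ fun i => by simp
  let φ : A ⊗[k] TruncPoly k n →ₗ[k] Matrix (Fin n) (Fin n) A := L ∘ₗ e.toLinearMap
  have hφdef : ∀ p, φ p = L (e p) := fun _ => rfl
  -- single-coefficient images
  have he_single : ∀ (x : A) (j : ℕ) (h : j < n),
      e (x ⊗ₜ[k] ((truncY k n) ^ j)) = Finsupp.single (⟨j, h⟩ : Fin n) x := by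
    intro x j h
    ext c
    rw [← hκapp, hκ, Finsupp.single_apply]
    by_cases hic : j = (c : ℕ)
    · rw [if_pos hic, if_pos (Fin.ext hic)]
    · rw [if_neg hic, if_neg fun hh => hic (Fin.ext_iff.mp hh)]
  have hφpow : ∀ (a : A) (j : ℕ),
      φ (a ⊗ₜ[k] ((truncY k n) ^ j)) = Mlin a * (jordanJ A n) ^ j := by
    intro a j
    by_cases h : j < n
    · rw [hφdef, he_single a j h, hL]
      rw [Finset.sum_eq_single (⟨j, h⟩ : Fin n)]
      · simp
      · intro m _ hm
        rw [Finsupp.single_apply, if_neg (fun hh => hm hh.symm), map_zero, zero_mul]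
      · intro hmem; exact absurd (Finset.mem_univ _) hmem
    · rw [truncY_pow_zero (le_of_not_gt h), tmul_zero, map_zero,
        jordanJ_pow_zero (le_of_not_gt h), mul_zero]
  -- γ 0
  have hγ0 : ∀ (c : Fin n) (x : A), γ 0 (c : ℕ) x = if (c : ℕ) = 0 then x else 0 := by
    intro c x
    have h1 : s (((truncY k n) ^ 0) ⊗ₜ[k] x) =
        ∑ j ∈ Finset.range n, γ 0 j x ⊗ₜ[k] ((truncY k n) ^ j) := hs 0 hn x
    rw [pow_zero, htw.1 x] at h1
    have h2 := congrArg (κ c) h1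
    rw [map_sum, show ((1 : TruncPoly k n)) = (truncY k n) ^ 0 from (pow_zero _).symm,
      hκ 0 c x] at h2
    rw [Finset.sum_congr rfl (fun j _ => hκ j c (γ 0 j x)),
      Finset.sum_ite_eq' (Finset.range n), if_pos (Finset.mem_range.mpr c.isLt)] at h2
    rw [← h2]
    by_cases hc : (c : ℕ) = 0
    · rw [if_pos hc, if_pos hc.symm]
    · rw [if_neg hc, if_neg (fun hh => hc hh.symm)]
  -- γ of 1
  have hγ1 : ∀ (i : ℕ), i < n → ∀ (c : Fin n),
      γ i (c : ℕ) (1 : A) = if (c : ℕ) = i then 1 else 0 := by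
    intro i hi c
    have h1 : s (((truncY k n) ^ i) ⊗ₜ[k] (1 : A)) =
        (1 : A) ⊗ₜ[k] ((truncY k n) ^ i) := htw.2.1 ((truncY k n) ^ i)
    rw [hs i hi 1] at h1
    have h2 := congrArg (κ c) h1
    rw [map_sum, hκ i c 1] at h2
    rw [Finset.sum_congr rfl (fun j _ => hκ j c (γ i j 1)),
      Finset.sum_ite_eq' (Finset.range n), if_pos (Finset.mem_range.mpr c.isLt)] at h2
    rw [h2]
    by_cases hc : (c : ℕ) = i
    · rw [if_pos hc, if_pos hc.symm]
    · rw [if_neg hc, if_neg (fun hh => hc hh.symm)]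
  -- unit
  have hunit : φ ((1 : A) ⊗ₜ[k] (1 : TruncPoly k n)) = 1 := by
    rw [show ((1 : TruncPoly k n)) = (truncY k n) ^ 0 from (pow_zero _).symm, hφpow,
      pow_zero, mul_one]
    ext i c
    rw [hMlin, hγ1 i i.isLt c, Matrix.one_apply]
    by_cases hic : i = c
    · rw [if_pos hic, if_pos (by rw [hic])]
    · rw [if_neg hic, if_neg (fun hh => hic (Fin.ext hh.symm))]
  -- injectivity
  have hinj : Function.Injective φ := by
    have hLrow : ∀ (f : Fin n →₀ A) (c : Fin n), (L f) ⟨0, hn⟩ c = f c := by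
      intro f c
      rw [hL, Matrix.sum_apply]
      have h1 : ∀ i : Fin n, (Mlin (f i) * (jordanJ A n) ^ (i : ℕ)) ⟨0, hn⟩ c =
          if (c : ℕ) = (i : ℕ) then f i else 0 := by
        intro i
        rw [jordanJ_pow, Matrix.mul_apply]
        have h2 : ∀ m : Fin n,
            (Mlin (f i)) ⟨0, hn⟩ m * (Matrix.of
              (fun i' c' : Fin n => if (i' : ℕ) + (i : ℕ) = (c' : ℕ) then (1:A) else 0)) m c =
            if (0 : ℕ) = (m : ℕ) then
              (if (m : ℕ) + (i : ℕ) = (c : ℕ) then f i else 0) else 0 := by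
          intro m
          rw [hMlin, hγ0 m (f i), Matrix.of_apply]
          by_cases hm : (m : ℕ) = 0
          · rw [if_pos hm, if_pos hm.symm]
            by_cases hmc : (m : ℕ) + (i : ℕ) = (c : ℕ)
            · rw [if_pos hmc, if_pos hmc, mul_one]
            · rw [if_neg hmc, if_neg hmc, mul_zero]
          · rw [if_neg hm, zero_mul, if_neg (fun hh : (0:ℕ) = (m : ℕ) => hm hh.symm)]
        rw [Finset.sum_congr rfl fun m _ => h2 m, sumFinIte _ 0, dif_pos hn]
        simp only [zero_add]
        by_cases hci : (c : ℕ) = (i : ℕ)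
        · rw [if_pos hci.symm, if_pos hci]
        · rw [if_neg (fun hh => hci hh.symm), if_neg hci]
      rw [Finset.sum_congr rfl fun i _ => h1 i]
      have h3 : ∀ i : Fin n, (if (c : ℕ) = (i : ℕ) then f i else 0) = f c → True := fun _ _ => trivial
      rw [sumFinIte (fun i : Fin n => f i) (c : ℕ), dif_pos c.isLt]
    intro p q hpq
    apply e.injective
    ext c
    have h4 := congrArg (fun M => M ⟨0, hn⟩ c) hpq
    rw [hφdef, hφdef] at h4
    simpa only [hLrow] using h4
  -- expansion of any element in coordinates
  have hrepr : ∀ p : A ⊗[k] TruncPoly k n,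
      p = ∑ i : Fin n, (κ i p) ⊗ₜ[k] ((truncY k n) ^ (i : ℕ)) := by
    intro p
    apply hext
    intro c
    rw [map_sum, Finset.sum_congr rfl (fun (i : Fin n) _ => hκ (i : ℕ) c (κ i p)),
      sumFinIte' (fun i : Fin n => κ i p) c]
  -- the twisted multiplication on pure tensors
  have htm : ∀ (a a' : A) (c c' : TruncPoly k n),
      twistedMul k A (TruncPoly k n) s ((a ⊗ₜ[k] c) ⊗ₜ[k] (a' ⊗ₜ[k] c')) =
        TensorProduct.map (LinearMap.mulLeft k a) (LinearMap.mulRight k c')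
          (s (c ⊗ₜ[k] a')) := by
    intro a a' c c'
    have key : ∀ z : A ⊗[k] TruncPoly k n,
        TensorProduct.map (LinearMap.mul' k A) (LinearMap.mul' k (TruncPoly k n))
          ((TensorProduct.assoc k A A (TruncPoly k n ⊗[k] TruncPoly k n)).symm
            (a ⊗ₜ[k] ((TensorProduct.assoc k A (TruncPoly k n) (TruncPoly k n))
              (z ⊗ₜ[k] c')))) =
        TensorProduct.map (LinearMap.mulLeft k a) (LinearMap.mulRight k c') z := by
      intro z
      induction z using TensorProduct.induction_on with
      | zero => simp
      | tmul x u => simp [TensorProduct.assoc_tmul, TensorProduct.assoc_symm_tmul,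
          LinearMap.mul'_apply]
      | add z₁ z₂ h₁ h₂ =>
        rw [add_tmul, map_add, tmul_add, map_add, map_add, map_add, h₁, h₂]
    rw [twistedMul]
    simp only [LinearMap.comp_apply, LinearEquiv.coe_coe, TensorProduct.assoc_tmul,
      LinearMap.lTensor_tmul, TensorProduct.assoc_symm_tmul, LinearMap.rTensor_tmul]
    exact key (s (c ⊗ₜ[k] a'))
  -- multiplicativity of the coefficients (condition (4))
  have hγmul : ∀ (i : ℕ), i < n → ∀ (c : Fin n) (a a' : A),
      γ i (c : ℕ) (a * a') =
        ∑ m ∈ Finset.range n, γ i m a * γ m (c : ℕ) a' := by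
    intro i hi c a a'
    have h1 := htw.2.2.2 ((truncY k n) ^ i) a a'
    rw [LinearMap.rTensor_tmul, hs i hi a, TensorProduct.sum_tmul, map_sum] at h1
    rw [Finset.sum_congr rfl (fun m _ => TensorProduct.assoc_tmul
      (R := k) (γ i m a) ((truncY k n) ^ m) a'), map_sum] at h1
    rw [Finset.sum_congr rfl (fun m hm => by
      rw [LinearMap.lTensor_tmul, hs m (Finset.mem_range.mp hm) a',
        TensorProduct.tmul_sum])] at h1
    rw [map_sum, Finset.sum_congr rfl (fun m _ => map_sum _ _ _), map_sum] at h1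
    simp only [TensorProduct.assoc_symm_tmul, LinearMap.rTensor_tmul,
      LinearMap.mul'_apply, map_sum] at h1
    rw [hs i hi (a * a')] at h1
    have h2 := congrArg (κ c) h1
    rw [map_sum, Finset.sum_congr rfl (fun j _ => hκ j c (γ i j (a * a'))),
      Finset.sum_ite_eq' (Finset.range n), if_pos (Finset.mem_range.mpr c.isLt)] at h2
    rw [map_sum, Finset.sum_congr rfl (fun m _ => by
      rw [map_sum, Finset.sum_congr rfl
        (fun j _ => hκ j c (γ i m a * γ m j a')),
        Finset.sum_ite_eq' (Finset.range n), if_pos (Finset.mem_range.mpr c.isLt)])] at h2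
    exact h2
  -- additivity of the coefficients (condition (3))
  have hγadd : ∀ (m r : ℕ), m < n → r < n → ∀ (c : Fin n) (a : A),
      (∑ j ∈ Finset.range n, ∑ l ∈ Finset.range n,
        (if l + j = (c : ℕ) then γ m l (γ r j a) else 0)) =
      (if m + r < n then γ (m + r) (c : ℕ) a else 0) := by
    intro m r hm hr c a
    have h1 := htw.2.2.1 ((truncY k n) ^ m) ((truncY k n) ^ r) a
    rw [hs r hr a, TensorProduct.tmul_sum, map_sum, map_sum] at h1
    simp only [TensorProduct.assoc_symm_tmul, LinearMap.rTensor_tmul] at h1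
    rw [Finset.sum_congr rfl (fun j hj => by
      rw [hs m hm (γ r j a), TensorProduct.sum_tmul]), map_sum] at h1
    rw [Finset.sum_congr rfl (fun j _ => map_sum _ _ _)] at h1
    simp only [map_sum, TensorProduct.assoc_tmul, LinearMap.lTensor_tmul,
      LinearMap.mul'_apply, ← pow_add] at h1
    have h2 := congrArg (κ c) h1
    rw [map_sum, Finset.sum_congr rfl (fun j _ => by
      rw [map_sum, Finset.sum_congr rfl
        (fun l _ => hκ (l + j) c (γ m l (γ r j a)))])] at h2
    rw [← h2]
    by_cases hmr : m + r < n
    · rw [if_pos hmr, hs (m + r) hmr a, map_sum,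
        Finset.sum_congr rfl (fun j _ => hκ j c (γ (m + r) j a)),
        Finset.sum_ite_eq' (Finset.range n), if_pos (Finset.mem_range.mpr c.isLt)]
    · rw [if_neg hmr, truncY_pow_zero (le_of_not_gt hmr), TensorProduct.zero_tmul,
        map_zero, map_zero]
  -- the key matrix identity
  have hmat : ∀ (a a' : A) (r : ℕ), r < n →
      Mlin a * (jordanJ A n) ^ r * Mlin a' =
        ∑ j ∈ Finset.range n, Mlin (a * γ r j a') * (jordanJ A n) ^ j := by
    intro a a' r hr
    ext i c
    rw [Matrix.sum_apply]
    have hRHS : ∀ j ∈ Finset.range n,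
        (Mlin (a * γ r j a') * (jordanJ A n) ^ j) i c =
        ∑ l ∈ Finset.range n, γ (i : ℕ) l a *
          (∑ m : Fin n, if (m : ℕ) + j = (c : ℕ) then γ l (m : ℕ) (γ r j a') else 0) := by
      intro j hj
      rw [jordanJ_pow, Matrix.mul_apply]
      have h1 : ∀ m : Fin n,
          (Mlin (a * γ r j a')) i m * (Matrix.of (fun i' c' : Fin n =>
            if (i' : ℕ) + j = (c' : ℕ) then (1:A) else 0)) m c =
          ∑ l ∈ Finset.range n, γ (i : ℕ) l a *
            (if (m : ℕ) + j = (c : ℕ) then γ l (m : ℕ) (γ r j a') else 0) := by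
        intro m
        rw [hMlin, hγmul (i : ℕ) i.isLt m a (γ r j a'), Matrix.of_apply]
        by_cases hc : (m : ℕ) + j = (c : ℕ)
        · rw [if_pos hc, mul_one]
          refine Finset.sum_congr rfl (fun l _ => ?_)
          rw [if_pos hc]
        · rw [if_neg hc, mul_zero]
          symm
          apply Finset.sum_eq_zero
          intro l _
          rw [if_neg hc, mul_zero]
      rw [Finset.sum_congr rfl (fun m _ => h1 m), Finset.sum_comm]
      exact Finset.sum_congr rfl (fun l _ => (Finset.mul_sum _ _ _).symm)
    rw [Finset.sum_congr rfl hRHS, Finset.sum_comm]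
    rw [Finset.sum_congr rfl (fun l _ => (Finset.mul_sum _ _ _).symm)]
    have hswap : ∀ l ∈ Finset.range n,
        γ (i : ℕ) l a * (∑ j ∈ Finset.range n,
          ∑ m : Fin n, if (m : ℕ) + j = (c : ℕ) then γ l (m : ℕ) (γ r j a') else 0) =
        γ (i : ℕ) l a * (if l + r < n then γ (l + r) (c : ℕ) a' else 0) := by
      intro l hl
      congr 1
      rw [← hγadd l r (Finset.mem_range.mp hl) hr c a']
      refine Finset.sum_congr rfl (fun j _ => ?_)
      rw [← Fin.sum_univ_eq_sum_range (fun m => if m + j = (c : ℕ) then γ l m (γ r j a') else 0) n]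
    rw [Finset.sum_congr rfl hswap]
    -- now the left-hand side
    rw [Matrix.mul_apply]
    have hLHS : ∀ m' : Fin n,
        (Mlin a * (jordanJ A n) ^ r) i m' * (Mlin a') m' c =
        ∑ l : Fin n, (if (l : ℕ) + r = (m' : ℕ) then γ (i : ℕ) (l : ℕ) a else 0) *
          γ (m' : ℕ) (c : ℕ) a' := by
      intro m'
      rw [jordanJ_pow, Matrix.mul_apply, hMlin, Finset.sum_mul]
      refine Finset.sum_congr rfl (fun l _ => ?_)
      rw [hMlin, Matrix.of_apply]
      by_cases hc : (l : ℕ) + r = (m' : ℕ)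
      · rw [if_pos hc, if_pos hc, mul_one]
      · rw [if_neg hc, if_neg hc, mul_zero, zero_mul]
    rw [Finset.sum_congr rfl (fun m' _ => hLHS m'), Finset.sum_comm]
    rw [← Fin.sum_univ_eq_sum_range (fun l => γ (i : ℕ) l a *
      (if l + r < n then γ (l + r) (c : ℕ) a' else 0)) n]
    refine Finset.sum_congr rfl (fun l _ => ?_)
    have h3 : ∀ m' : Fin n,
        (if (l : ℕ) + r = (m' : ℕ) then γ (i : ℕ) (l : ℕ) a else 0) *
          γ (m' : ℕ) (c : ℕ) a' =
        if (l : ℕ) + r = (m' : ℕ) then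
          γ (i : ℕ) (l : ℕ) a * γ (m' : ℕ) (c : ℕ) a' else 0 := by
      intro m'
      by_cases hc : (l : ℕ) + r = (m' : ℕ)
      · rw [if_pos hc, if_pos hc]
      · rw [if_neg hc, if_neg hc, zero_mul]
    rw [Finset.sum_congr rfl (fun m' _ => h3 m'),
      sumFinIte (fun m' : Fin n => γ (i : ℕ) (l : ℕ) a * γ (m' : ℕ) (c : ℕ) a')
        ((l : ℕ) + r)]
    by_cases hlr : (l : ℕ) + r < n
    · rw [dif_pos hlr, if_pos hlr]
    · rw [dif_neg hlr, if_neg hlr, mul_zero]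
  -- multiplicativity on pure basis tensors
  have hpure : ∀ (a a' : A) (r t : ℕ), r < n → t < n →
      φ (twistedMul k A (TruncPoly k n) s
          ((a ⊗ₜ[k] ((truncY k n) ^ r)) ⊗ₜ[k] (a' ⊗ₜ[k] ((truncY k n) ^ t)))) =
        φ (a ⊗ₜ[k] ((truncY k n) ^ r)) * φ (a' ⊗ₜ[k] ((truncY k n) ^ t)) := by
    intro a a' r t hr ht
    rw [htm, hs r hr a', map_sum]
    simp only [TensorProduct.map_tmul, LinearMap.mulLeft_apply, LinearMap.mulRight_apply,
      ← pow_add]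
    rw [map_sum, Finset.sum_congr rfl (fun j _ => hφpow (a * γ r j a') (j + t))]
    rw [Finset.sum_congr rfl (fun j _ => by rw [pow_add, ← mul_assoc]), ← Finset.sum_mul,
      ← hmat a a' r hr, hφpow, hφpow]
    exact mul_assoc (Mlin a * (jordanJ A n) ^ r) (Mlin a') ((jordanJ A n) ^ t)
  -- general multiplicativity
  refine ⟨φ, hinj, hunit, fun a j => hφpow a j, ?_⟩
  intro p q
  calc φ (twistedMul k A (TruncPoly k n) s (p ⊗ₜ[k] q))
      = φ (twistedMul k A (TruncPoly k n) s
          ((∑ i : Fin n, (κ i p) ⊗ₜ[k] ((truncY k n) ^ (i : ℕ))) ⊗ₜ[k]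
           (∑ j : Fin n, (κ j q) ⊗ₜ[k] ((truncY k n) ^ (j : ℕ))))) := by
        rw [← hrepr p, ← hrepr q]
    _ = ∑ i : Fin n, ∑ j : Fin n,
          φ (twistedMul k A (TruncPoly k n) s
            (((κ i p) ⊗ₜ[k] ((truncY k n) ^ (i : ℕ))) ⊗ₜ[k]
             ((κ j q) ⊗ₜ[k] ((truncY k n) ^ (j : ℕ))))) := by
        rw [TensorProduct.sum_tmul, map_sum, map_sum]
        refine Finset.sum_congr rfl (fun i _ => ?_)
        rw [TensorProduct.tmul_sum, map_sum, map_sum]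
    _ = ∑ i : Fin n, ∑ j : Fin n,
          φ ((κ i p) ⊗ₜ[k] ((truncY k n) ^ (i : ℕ))) *
          φ ((κ j q) ⊗ₜ[k] ((truncY k n) ^ (j : ℕ))) := by
        refine Finset.sum_congr rfl (fun i _ => Finset.sum_congr rfl (fun j _ => ?_))
        exact hpure (κ i p) (κ j q) (i : ℕ) (j : ℕ) i.isLt j.isLt
    _ = (∑ i : Fin n, φ ((κ i p) ⊗ₜ[k] ((truncY k n) ^ (i : ℕ)))) *
        (∑ j : Fin n, φ ((κ j q) ⊗ₜ[k] ((truncY k n) ^ (j : ℕ)))) := by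
        rw [Finset.sum_mul_sum]
    _ = φ p * φ q := by rw [← map_sum, ← map_sum, ← hrepr p, ← hrepr q]
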